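/- If t̄ ∉ C and λ = λ#, then the norm-penalized KLIEP loss ℓ_λ(Δ) = ℓ(Δ) + λ·N(Δ) is bounded from below: there exists M ∈ ℝ such that ℓ_λ(Δ) ≥ M for all Δ ∈ ℝ^k. (Theorem 2(iii)(b).) -/

import Mathlib

open scoped RealInnerProductSpace

/-- The empirical KLIEP loss
`ℓ(Δ) = -⟪Δ, t̄⟫ + log((1/n) ∑_j exp ⟪Δ, t_j⟫)`. -/
noncomputable def kliepLoss {k n : ℕ} (tbar : EuclideanSpace ℝ (Fin k))
    (t : Fin n → EuclideanSpace ℝ (Fin k)) (Δ : EuclideanSpace ℝ (Fin k)) : ℝ :=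
  -⟪Δ, tbar⟫ + Real.log ((1 / (n : ℝ)) * ∑ j, Real.exp ⟪Δ, t j⟫)

/-- The dual norm `N#(v) = sup { ⟪Δ, v⟫ : N(Δ) ≤ 1 }` of a norm `N` on `ℝ^k`. -/
noncomputable def dualNorm {k : ℕ} (N : EuclideanSpace ℝ (Fin k) → ℝ)
    (v : EuclideanSpace ℝ (Fin k)) : ℝ :=
  sSup ((fun Δ : EuclideanSpace ℝ (Fin k) => ⟪Δ, v⟫) '' {Δ | N Δ ≤ 1})

/-- Theorem 2(iii)(b): if `t̄ ∉ C` and `λ = λ#` (the dual-norm distance from `t̄` to `C`),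
then the norm-penalized KLIEP loss `ℓ(Δ) + λ#·N(Δ)` is bounded from below. -/
theorem penalized_kliep_bddBelow_of_eq_dual_dist {k n : ℕ} (hk : 1 ≤ k) (hn : 1 ≤ n)
    (tbar : EuclideanSpace ℝ (Fin k)) (t : Fin n → EuclideanSpace ℝ (Fin k))
    (N : EuclideanSpace ℝ (Fin k) → ℝ)
    (hN_add : ∀ x y, N (x + y) ≤ N x + N y)
    (hN_smul : ∀ (c : ℝ) (x), N (c • x) = |c| * N x)
    (hN_zero : ∀ x, N x = 0 ↔ x = 0)
    (hout : tbar ∉ convexHull ℝ (Set.range t))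
    (lam : ℝ)
    (hlam : IsLeast ((fun s => dualNorm N (tbar - s)) '' convexHull ℝ (Set.range t)) lam) :
    ∃ M : ℝ, ∀ Δ : EuclideanSpace ℝ (Fin k),
      M ≤ kliepLoss tbar t Δ + lam * N Δ := by
  classical
  have hnpos : (0 : ℝ) < n := by exact_mod_cast hn
  -- basic facts about N
  have hN0 : N 0 = 0 := (hN_zero 0).mpr rfl
  have hNneg : ∀ x, N (-x) = N x := by
    intro x
    have h := hN_smul (-1) x
    simpa using h
  have hNnn : ∀ x, 0 ≤ N x := by
    intro x
    have h := hN_add x (-x)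
    rw [add_neg_cancel, hN0, hNneg] at h
    linarith
  -- N is dominated by a multiple of the euclidean norm
  have hsum : ∀ (s : Finset (Fin k)) (f : Fin k → EuclideanSpace ℝ (Fin k)),
      N (∑ i ∈ s, f i) ≤ ∑ i ∈ s, N (f i) := by
    intro s f
    induction s using Finset.induction with
    | empty => simp [hN0]
    | insert _ _ hnotmem ih =>
      rw [Finset.sum_insert hnotmem, Finset.sum_insert hnotmem]
      exact le_trans (hN_add _ _) (by linarith)
  set Cb : ℝ := ∑ i, N (EuclideanSpace.single i (1 : ℝ)) with hCbdef
  have hcoord : ∀ (x : EuclideanSpace ℝ (Fin k)) (i : Fin k), |x i| ≤ ‖x‖ := by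
    intro x i
    have h := abs_real_inner_le_norm (EuclideanSpace.single i (1 : ℝ)) x
    rw [EuclideanSpace.inner_single_left, EuclideanSpace.norm_single] at h
    simpa using h
  have hCb : ∀ x, N x ≤ Cb * ‖x‖ := by
    intro x
    have hx : x = ∑ i, x i • EuclideanSpace.single i (1 : ℝ) := by
      have := (EuclideanSpace.basisFun (Fin k) ℝ).sum_repr x
      simp only [EuclideanSpace.basisFun_apply, EuclideanSpace.basisFun_repr] at this
      exact this.symm
    calc N x = N (∑ i, x i • EuclideanSpace.single i (1 : ℝ)) := by rw [← hx]
    _ ≤ ∑ i, N (x i • EuclideanSpace.single i (1 : ℝ)) := hsum _ _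
    _ = ∑ i, |x i| * N (EuclideanSpace.single i (1 : ℝ)) := by
        simp [hN_smul]
    _ ≤ ∑ i, ‖x‖ * N (EuclideanSpace.single i (1 : ℝ)) := by
        refine Finset.sum_le_sum fun i _ => ?_
        exact mul_le_mul_of_nonneg_right (hcoord x i) (hNnn _)
    _ = Cb * ‖x‖ := by rw [hCbdef, Finset.sum_mul]; exact Finset.sum_congr rfl fun i _ => mul_comm _ _
  -- N is continuous
  have hNlip : ∀ x y, |N x - N y| ≤ N (x - y) := by
    intro x y
    rw [abs_sub_le_iff]
    constructor
    · have := hN_add (x - y) y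
      simp only [sub_add_cancel] at this
      linarith
    · have := hN_add (y - x) x
      simp only [sub_add_cancel] at this
      have h2 : N (y - x) = N (x - y) := by rw [← neg_sub x y, hNneg]
      linarith
  have hcont : Continuous N := by
    have hCbnn : 0 ≤ Cb := Finset.sum_nonneg fun i _ => hNnn _
    refine (LipschitzWith.of_dist_le_mul (K := Real.toNNReal Cb) (f := N) ?_).continuous
    intro x y
    rw [Real.dist_eq, Real.coe_toNNReal _ hCbnn, dist_eq_norm]
    exact le_trans (hNlip x y) (hCb _)
  -- N dominates a multiple of the euclidean norm (via compactness of the sphere)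
  obtain ⟨x₀, hx₀mem, hx₀min⟩ :=
    (isCompact_sphere (0 : EuclideanSpace ℝ (Fin k)) 1).exists_isMinOn
      ⟨EuclideanSpace.single ⟨0, hk⟩ (1 : ℝ), by
        simp [mem_sphere_iff_norm, EuclideanSpace.norm_single]⟩
      hcont.continuousOn
  have hx₀norm : ‖x₀‖ = 1 := by simpa [mem_sphere_iff_norm] using hx₀mem
  have hx₀ne : x₀ ≠ 0 := by
    intro h; rw [h, norm_zero] at hx₀norm; norm_num at hx₀norm
  set m : ℝ := N x₀ with hmdef
  have hm : 0 < m := lt_of_le_of_ne (hNnn x₀) fun h => hx₀ne ((hN_zero x₀).mp h.symm)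
  have hml : ∀ x, m * ‖x‖ ≤ N x := by
    intro x
    rcases eq_or_ne x 0 with rfl | hx
    · simp [hN0]
    · have hxn : (0 : ℝ) < ‖x‖ := norm_pos_iff.mpr hx
      have hu : (‖x‖⁻¹ • x) ∈ Metric.sphere (0 : EuclideanSpace ℝ (Fin k)) 1 := by
        simp [mem_sphere_iff_norm, norm_smul, abs_of_pos (inv_pos.mpr hxn),
          inv_mul_cancel₀ hxn.ne']
      have hmin := hx₀min hu
      have : m ≤ N (‖x‖⁻¹ • x) := hmin
      rw [hN_smul, abs_of_pos (inv_pos.mpr hxn)] at this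
      calc m * ‖x‖ ≤ (‖x‖⁻¹ * N x) * ‖x‖ :=
            mul_le_mul_of_nonneg_right this hxn.le
        _ = N x := by field_simp
  -- duality inequality
  have hbdd : ∀ v : EuclideanSpace ℝ (Fin k),
      BddAbove ((fun Δ : EuclideanSpace ℝ (Fin k) => ⟪Δ, v⟫) '' {Δ | N Δ ≤ 1}) := by
    intro v
    refine ⟨m⁻¹ * ‖v‖, ?_⟩
    rintro y ⟨Δ, hΔ, rfl⟩
    have h1 : ‖Δ‖ ≤ m⁻¹ := by
      have := hml Δ
      have h2 : m * ‖Δ‖ ≤ 1 := le_trans this hΔ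
      rw [← le_div_iff₀' hm] at h2
      simpa [one_div] using h2
    calc ⟪Δ, v⟫ ≤ ‖Δ‖ * ‖v‖ := real_inner_le_norm Δ v
      _ ≤ m⁻¹ * ‖v‖ := mul_le_mul_of_nonneg_right h1 (norm_nonneg v)
  have hdual : ∀ (Δ v : EuclideanSpace ℝ (Fin k)), ⟪Δ, v⟫ ≤ N Δ * dualNorm N v := by
    intro Δ v
    rcases eq_or_ne Δ 0 with rfl | hΔ
    · simp [hN0]
    · have hNΔ : 0 < N Δ := lt_of_le_of_ne (hNnn Δ) fun h => hΔ ((hN_zero Δ).mp h.symm)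
      have hu : N ((N Δ)⁻¹ • Δ) ≤ 1 := by
        rw [hN_smul, abs_of_pos (inv_pos.mpr hNΔ), inv_mul_cancel₀ hNΔ.ne']
      have hle : ⟪(N Δ)⁻¹ • Δ, v⟫ ≤ dualNorm N v :=
        le_csSup (hbdd v) ⟨(N Δ)⁻¹ • Δ, hu, rfl⟩
      rw [real_inner_smul_left] at hle
      calc ⟪Δ, v⟫ = N Δ * ((N Δ)⁻¹ * ⟪Δ, v⟫) := by field_simp
        _ ≤ N Δ * dualNorm N v := mul_le_mul_of_nonneg_left hle hNΔ.le
  -- pick the minimizer s ∈ C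
  obtain ⟨s, hsC, hslam⟩ := hlam.1
  refine ⟨-Real.log n, fun Δ => ?_⟩
  haveI : NeZero n := ⟨by omega⟩
  have huniv : (Finset.univ : Finset (Fin n)).Nonempty := Finset.univ_nonempty
  set B : ℝ := Finset.univ.sup' huniv (fun j => ⟪Δ, t j⟫) with hBdef
  -- ⟪Δ, s⟫ ≤ B
  have hsB : ⟪Δ, s⟫ ≤ B := by
    have hconv : Convex ℝ {x : EuclideanSpace ℝ (Fin k) | ⟪Δ, x⟫ ≤ B} := by
      refine convex_halfSpace_le ?_ B
      constructor
      · intro x y; exact inner_add_right Δ x y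
      · intro c x; exact real_inner_smul_right Δ x c
    have hsub : Set.range t ⊆ {x : EuclideanSpace ℝ (Fin k) | ⟪Δ, x⟫ ≤ B} := by
      rintro _ ⟨j, rfl⟩
      exact Finset.le_sup' (fun j => ⟪Δ, t j⟫) (Finset.mem_univ j)
    exact convexHull_min hsub hconv hsC
  -- exp B ≤ ∑ exp
  obtain ⟨j₀, _, hj₀⟩ := Finset.exists_mem_eq_sup' huniv (fun j => ⟪Δ, t j⟫)
  have hexp : Real.exp B ≤ ∑ j, Real.exp ⟪Δ, t j⟫ := by
    rw [hBdef, hj₀]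
    exact Finset.single_le_sum (f := fun j => Real.exp ⟪Δ, t j⟫)
      (fun j _ => (Real.exp_pos _).le) (Finset.mem_univ j₀)
  -- lower bound on the log term
  have hlog : B - Real.log n ≤ Real.log ((1 / (n : ℝ)) * ∑ j, Real.exp ⟪Δ, t j⟫) := by
    have h1 : (1 / (n : ℝ)) * Real.exp B ≤ (1 / (n : ℝ)) * ∑ j, Real.exp ⟪Δ, t j⟫ :=
      mul_le_mul_of_nonneg_left hexp (by positivity)
    have h2 : Real.log ((1 / (n : ℝ)) * Real.exp B) = B - Real.log n := by
      rw [Real.log_mul (by positivity) (Real.exp_pos _).ne', Real.log_exp,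
        one_div, Real.log_inv]
      ring
    calc B - Real.log n = Real.log ((1 / (n : ℝ)) * Real.exp B) := h2.symm
      _ ≤ _ := Real.log_le_log (by positivity) h1
  -- conclude
  have hkey : ⟪Δ, tbar - s⟫ ≤ N Δ * lam := by
    have h := hdual Δ (tbar - s)
    have hslam' : dualNorm N (tbar - s) = lam := hslam
    rwa [hslam'] at h
  have hinner : ⟪Δ, tbar - s⟫ = ⟪Δ, tbar⟫ - ⟪Δ, s⟫ := inner_sub_right Δ tbar s
  have : kliepLoss tbar t Δ + lam * N Δ ≥
      -⟪Δ, tbar⟫ + (B - Real.log n) + lam * N Δ := by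
    unfold kliepLoss
    linarith
  have hBs : ⟪Δ, s⟫ ≤ B := hsB
  nlinarith [hkey, hinner, hBs, this]
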